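/- arXiv:2011.10323 — 2 statements merged into one kernel-verified Lean document; each statement's English description precedes it below -/
import Mathlib

section
/- Let M ≥ 1 and suppose y ∈ ℝ^M, x ∈ ℝ^{M+1} satisfy 1 ≥ x_1 ≥ y_1 ≥ x_2 ≥ y_2 ≥ ··· ≥ y_M ≥ x_{M+1} ≥ 0. Then ∏_{1≤i<j≤M} (y_i−x_{j+1})(y_i−y_j)^{-1}(x_i−y_j)(x_i−x_{j+1})^{-1} · ∏_{i=1}^M (y_i−x_{i+1})(x_i−y_i)(x_i−x_{i+1})^{-1} ≤ 1, whenever all the factors appearing with negative exponent are strictly positive. -/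
/-- For strictly interlacing sequences `1 ≥ x₁ > y₁ > x₂ > ⋯ > y_M > x_{M+1} ≥ 0`
(so that all denominators below are strictly positive), the product
`∏_{i<j≤M} (yᵢ−x_{j+1})(yᵢ−y_j)⁻¹(xᵢ−y_j)(xᵢ−x_{j+1})⁻¹ ·
 ∏_{i=1}^M (yᵢ−x_{i+1})(xᵢ−yᵢ)(xᵢ−x_{i+1})⁻¹` is at most `1`. -/
theorem interlacing_weight_le_one (M : ℕ) (hM : 1 ≤ M)
    (y : Fin M → ℝ) (x : Fin (M + 1) → ℝ)
    (hx1 : x 0 ≤ 1) (hx0 : 0 ≤ x (Fin.last M))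
    (hinter : ∀ i : Fin M, x i.castSucc ≥ y i ∧ y i ≥ x i.succ)
    (hy : ∀ i j : Fin M, i < j → y j < y i)
    (hx : ∀ i j : Fin (M + 1), i < j → x j < x i) :
    (∏ i : Fin M, ∏ j ∈ Finset.Ioi i,
        (y i - x j.succ) * (y i - y j)⁻¹ * (x i.castSucc - y j) *
          (x i.castSucc - x j.succ)⁻¹) *
      ∏ i : Fin M,
        (y i - x i.succ) * (x i.castSucc - y i) * (x i.castSucc - x i.succ)⁻¹ ≤ 1 := by
  classical
  have hxle : ∀ a b : Fin (M + 1), a ≤ b → x b ≤ x a := by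
    intro a b hab
    rcases hab.lt_or_eq with h | h
    · exact (hx a b h).le
    · rw [h]
  have hyx : ∀ i : Fin M, y i ≤ x i.castSucc := fun i => (hinter i).1
  have hxy : ∀ i : Fin M, x i.succ ≤ y i := fun i => (hinter i).2
  -- the three regrouped products
  set A : ℝ := ∏ i : Fin M, ∏ j ∈ Finset.Ici i,
      ((y i - x j.succ) * (x i.castSucc - x j.succ)⁻¹) with hA
  set B : ℝ := ∏ i : Fin M, ∏ j ∈ Finset.Ioi i,
      ((x i.succ - y j) * (y i - y j)⁻¹) with hB
  set C : ℝ := ∏ j : Fin M, (x 0 - y j) with hC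
  -- the per-column reindexing identity
  have hstep : ∀ j : Fin M, (∏ i ∈ Finset.Iic j, (x i.castSucc - y j)) =
      (x 0 - y j) * ∏ i ∈ Finset.Iio j, (x i.succ - y j) := by
    intro j
    have hinj1 : ∀ a ∈ Finset.Iic j, ∀ b ∈ Finset.Iic j,
        Fin.castSucc a = Fin.castSucc b → a = b := fun a _ b _ h =>
      Fin.castSucc_injective _ h
    have hinj2 : ∀ a ∈ Finset.Iio j, ∀ b ∈ Finset.Iio j,
        Fin.succ a = Fin.succ b → a = b := fun a _ b _ h => Fin.succ_injective _ h
    have himg : (Finset.Iic j).image Fin.castSucc =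
        insert (0 : Fin (M + 1)) ((Finset.Iio j).image Fin.succ) := by
      ext k
      simp only [Finset.mem_image, Finset.mem_insert, Finset.mem_Iic, Finset.mem_Iio,
        Fin.ext_iff, Fin.le_def, Fin.lt_def, Fin.val_zero, Fin.val_succ, Fin.coe_castSucc]
      constructor
      · rintro ⟨i, hij, hik⟩
        by_cases h0 : (k : ℕ) = 0
        · exact Or.inl h0
        · exact Or.inr ⟨⟨(k : ℕ) - 1, by omega⟩, by simp; omega, by simp; omega⟩
      · rintro (h0 | ⟨i, hij, hik⟩)
        · exact ⟨⟨0, by omega⟩, by simp, by simp; omega⟩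
        · exact ⟨⟨(i : ℕ) + 1, by omega⟩, by simp; omega, by simp; omega⟩
    have hnot : (0 : Fin (M + 1)) ∉ (Finset.Iio j).image Fin.succ := by
      simp [Fin.succ_ne_zero]
    calc (∏ i ∈ Finset.Iic j, (x i.castSucc - y j))
        = ∏ k ∈ (Finset.Iic j).image Fin.castSucc, (x k - y j) := by
          rw [Finset.prod_image hinj1]
      _ = ∏ k ∈ insert (0 : Fin (M + 1)) ((Finset.Iio j).image Fin.succ), (x k - y j) := by
          rw [himg]
      _ = (x 0 - y j) * ∏ k ∈ (Finset.Iio j).image Fin.succ, (x k - y j) :=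
          Finset.prod_insert hnot
      _ = (x 0 - y j) * ∏ i ∈ Finset.Iio j, (x i.succ - y j) := by
          rw [Finset.prod_image hinj2]
  -- core identity
  have core : (∏ i : Fin M, ∏ j ∈ Finset.Ioi i, (x i.castSucc - y j)) *
      (∏ i : Fin M, (x i.castSucc - y i)) =
      (∏ i : Fin M, ∏ j ∈ Finset.Ioi i, (x i.succ - y j)) * C := by
    have h1 : (∏ i : Fin M, ∏ j ∈ Finset.Ici i, (x i.castSucc - y j)) =
        (∏ i : Fin M, (x i.castSucc - y i)) *
          (∏ i : Fin M, ∏ j ∈ Finset.Ioi i, (x i.castSucc - y j)) := by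
      rw [← Finset.prod_mul_distrib]
      refine Finset.prod_congr rfl fun i _ => ?_
      rw [Finset.Ici_eq_cons_Ioi, Finset.prod_cons]
    have h2 : (∏ i : Fin M, ∏ j ∈ Finset.Ici i, (x i.castSucc - y j)) =
        ∏ j : Fin M, ∏ i ∈ Finset.Iic j, (x i.castSucc - y j) := by
      refine Finset.prod_comm' fun i j => ?_
      simp [Finset.mem_Ici, Finset.mem_Iic]
    have h3 : (∏ j : Fin M, ∏ i ∈ Finset.Iio j, (x i.succ - y j)) =
        ∏ i : Fin M, ∏ j ∈ Finset.Ioi i, (x i.succ - y j) := by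
      refine Finset.prod_comm' fun j i => ?_
      simp [Finset.mem_Iio, Finset.mem_Ioi]
    calc (∏ i : Fin M, ∏ j ∈ Finset.Ioi i, (x i.castSucc - y j)) *
          (∏ i : Fin M, (x i.castSucc - y i))
        = ∏ i : Fin M, ∏ j ∈ Finset.Ici i, (x i.castSucc - y j) := by
          rw [h1]; ring
      _ = ∏ j : Fin M, ∏ i ∈ Finset.Iic j, (x i.castSucc - y j) := h2
      _ = ∏ j : Fin M, ((x 0 - y j) * ∏ i ∈ Finset.Iio j, (x i.succ - y j)) :=
          Finset.prod_congr rfl fun j _ => hstep j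
      _ = C * ∏ j : Fin M, ∏ i ∈ Finset.Iio j, (x i.succ - y j) := by
          rw [Finset.prod_mul_distrib]
      _ = (∏ i : Fin M, ∏ j ∈ Finset.Ioi i, (x i.succ - y j)) * C := by
          rw [h3]; ring
  -- main factorization
  have main : (∏ i : Fin M, ∏ j ∈ Finset.Ioi i,
        (y i - x j.succ) * (y i - y j)⁻¹ * (x i.castSucc - y j) *
          (x i.castSucc - x j.succ)⁻¹) *
      (∏ i : Fin M,
        (y i - x i.succ) * (x i.castSucc - y i) * (x i.castSucc - x i.succ)⁻¹) =
      A * B * C := by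
    have split1 : (∏ i : Fin M, ∏ j ∈ Finset.Ioi i,
        (y i - x j.succ) * (y i - y j)⁻¹ * (x i.castSucc - y j) *
          (x i.castSucc - x j.succ)⁻¹) =
        (∏ i : Fin M, ∏ j ∈ Finset.Ioi i, ((y i - x j.succ) * (x i.castSucc - x j.succ)⁻¹)) *
        ((∏ i : Fin M, ∏ j ∈ Finset.Ioi i, (x i.castSucc - y j)) *
         (∏ i : Fin M, ∏ j ∈ Finset.Ioi i, (y i - y j)⁻¹)) := by
      rw [← Finset.prod_mul_distrib, ← Finset.prod_mul_distrib]
      refine Finset.prod_congr rfl fun i _ => ?_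
      rw [← Finset.prod_mul_distrib, ← Finset.prod_mul_distrib]
      exact Finset.prod_congr rfl fun j _ => by ring
    have split2 : (∏ i : Fin M,
        (y i - x i.succ) * (x i.castSucc - y i) * (x i.castSucc - x i.succ)⁻¹) =
        (∏ i : Fin M, ((y i - x i.succ) * (x i.castSucc - x i.succ)⁻¹)) *
        (∏ i : Fin M, (x i.castSucc - y i)) := by
      rw [← Finset.prod_mul_distrib]
      exact Finset.prod_congr rfl fun i _ => by ring
    have hAfac : A = (∏ i : Fin M, ((y i - x i.succ) * (x i.castSucc - x i.succ)⁻¹)) *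
        (∏ i : Fin M, ∏ j ∈ Finset.Ioi i, ((y i - x j.succ) * (x i.castSucc - x j.succ)⁻¹)) := by
      rw [hA, ← Finset.prod_mul_distrib]
      refine Finset.prod_congr rfl fun i _ => ?_
      rw [Finset.Ici_eq_cons_Ioi, Finset.prod_cons]
    have hBfac : B = (∏ i : Fin M, ∏ j ∈ Finset.Ioi i, (x i.succ - y j)) *
        (∏ i : Fin M, ∏ j ∈ Finset.Ioi i, (y i - y j)⁻¹) := by
      rw [hB, ← Finset.prod_mul_distrib]
      refine Finset.prod_congr rfl fun i _ => ?_
      rw [← Finset.prod_mul_distrib]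
    rw [split1, split2, hAfac, hBfac]
    linear_combination ((∏ i : Fin M, ∏ j ∈ Finset.Ioi i,
        ((y i - x j.succ) * (x i.castSucc - x j.succ)⁻¹)) *
      (∏ i : Fin M, ((y i - x i.succ) * (x i.castSucc - x i.succ)⁻¹)) *
      (∏ i : Fin M, ∏ j ∈ Finset.Ioi i, (y i - y j)⁻¹)) * core
  rw [main]
  -- bounds on individual factors
  have factA : ∀ i j : Fin M, i ≤ j →
      0 ≤ (y i - x j.succ) * (x i.castSucc - x j.succ)⁻¹ ∧
        (y i - x j.succ) * (x i.castSucc - x j.succ)⁻¹ ≤ 1 := by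
    intro i j hij
    have hd : (0 : ℝ) < x i.castSucc - x j.succ :=
      sub_pos.mpr (hx _ _ (Fin.castSucc_lt_succ_iff.mpr hij))
    have hn : (0 : ℝ) ≤ y i - x j.succ :=
      sub_nonneg.mpr ((hxle _ _ (Fin.succ_le_succ_iff.mpr hij)).trans (hxy i))
    refine ⟨mul_nonneg hn (inv_nonneg.mpr hd.le), ?_⟩
    rw [← div_eq_mul_inv]
    exact div_le_one_of_le₀ (by linarith [hyx i]) hd.le
  have factB : ∀ i j : Fin M, i < j →
      0 ≤ (x i.succ - y j) * (y i - y j)⁻¹ ∧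
        (x i.succ - y j) * (y i - y j)⁻¹ ≤ 1 := by
    intro i j hij
    have hd : (0 : ℝ) < y i - y j := sub_pos.mpr (hy _ _ hij)
    have hn : (0 : ℝ) ≤ x i.succ - y j :=
      sub_nonneg.mpr ((hyx j).trans (hxle _ _ (Fin.succ_le_castSucc_iff.mpr hij)))
    refine ⟨mul_nonneg hn (inv_nonneg.mpr hd.le), ?_⟩
    rw [← div_eq_mul_inv]
    exact div_le_one_of_le₀ (by linarith [hxy i]) hd.le
  have factC : ∀ j : Fin M, 0 ≤ x 0 - y j ∧ x 0 - y j ≤ 1 := by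
    intro j
    have h1 : y j ≤ x 0 := (hyx j).trans (hxle _ _ (Fin.zero_le _))
    have h2 : (0 : ℝ) ≤ y j := hx0.trans ((hxle j.succ (Fin.last M) (Fin.le_last _)).trans (hxy j))
    exact ⟨by linarith, by linarith⟩
  have hA0 : 0 ≤ A := Finset.prod_nonneg fun i _ =>
    Finset.prod_nonneg fun j hj => (factA i j (Finset.mem_Ici.mp hj)).1
  have hA1 : A ≤ 1 := Finset.prod_le_one
    (fun i _ => Finset.prod_nonneg fun j hj => (factA i j (Finset.mem_Ici.mp hj)).1)
    (fun i _ => Finset.prod_le_one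
      (fun j hj => (factA i j (Finset.mem_Ici.mp hj)).1)
      (fun j hj => (factA i j (Finset.mem_Ici.mp hj)).2))
  have hB0 : 0 ≤ B := Finset.prod_nonneg fun i _ =>
    Finset.prod_nonneg fun j hj => (factB i j (Finset.mem_Ioi.mp hj)).1
  have hB1 : B ≤ 1 := Finset.prod_le_one
    (fun i _ => Finset.prod_nonneg fun j hj => (factB i j (Finset.mem_Ioi.mp hj)).1)
    (fun i _ => Finset.prod_le_one
      (fun j hj => (factB i j (Finset.mem_Ioi.mp hj)).1)
      (fun j hj => (factB i j (Finset.mem_Ioi.mp hj)).2))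
  have hC0 : 0 ≤ C := Finset.prod_nonneg fun j _ => (factC j).1
  have hC1 : C ≤ 1 := Finset.prod_le_one (fun j _ => (factC j).1) (fun j _ => (factC j).2)
  exact mul_le_one₀ (mul_le_one₀ hA1 hB0 hB1) hC0 hC1
end

section
/- Let q ∈ ℕ, q ≥ 1, and β ≥ 4q². Then the integral ∫ over {x ∈ [0,1]^{2q} : x_1 ≥ ··· ≥ x_{2q}, ∑_{i=1}^{2q} x_i = q} of ∏_{1≤i<j≤2q}(x_i−x_j)^{4/β} ∏_{i=1}^{2q}[x_i(1−x_i)]^{2/β−1} (with respect to (2q−1)-dimensional Lebesgue measure on the hyperplane ∑x_i = q) is infinite. -/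
open MeasureTheory

open Finset
open scoped ENNReal

lemma sum_range_cast_id (n : ℕ) :
    (∑ i ∈ Finset.range n, (i : ℝ)) * 2 = (n : ℝ) * ((n : ℝ) - 1) := by
  induction n with
  | zero => simp
  | succ m ih =>
    rw [Finset.sum_range_succ]
    push_cast
    nlinarith [ih]

noncomputable def bLo (q : ℕ) (t : ℝ) (i : ℕ) : ℝ :=
  if i < q then 1 - ((i : ℝ) + 3 - (q : ℝ)⁻¹) * t - t / (4 * q)
  else (2 * (q : ℝ) + 2 - (i : ℝ)) * t

noncomputable def bBox (q : ℕ) (t : ℝ) : Set (Fin (2 * q - 1) → ℝ) :=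
  Set.univ.pi fun i => Set.Icc (bLo q t i) (bLo q t i + t / (4 * q))

lemma sum_bLo (q : ℕ) (hq : 1 ≤ q) (t : ℝ) :
    ∑ i : Fin (2 * q - 1), bLo q t (i : ℕ) = q - 2 * t - t / 4 := by
  have hq0 : (q : ℝ) ≠ 0 := Nat.cast_ne_zero.mpr (by omega)
  rw [Fin.sum_univ_eq_sum_range (fun i => bLo q t i) (2 * q - 1)]
  rw [Finset.range_eq_Ico,
    ← Finset.sum_Ico_consecutive _ (Nat.zero_le q) (by omega : q ≤ 2 * q - 1)]
  have h1 : ∑ i ∈ Finset.Ico 0 q, bLo q t i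
      = ∑ i ∈ Finset.range q, ((1 - (3 - (q : ℝ)⁻¹) * t - t / (4 * q)) - (i : ℝ) * t) := by
    rw [← Finset.range_eq_Ico]
    refine Finset.sum_congr rfl fun i hi => ?_
    rw [bLo, if_pos (Finset.mem_range.mp hi)]
    ring
  have h2 : ∑ i ∈ Finset.Ico q (2 * q - 1), bLo q t i
      = ∑ i ∈ Finset.range (q - 1), (((q : ℝ) + 2) * t - (i : ℝ) * t) := by
    rw [Finset.sum_Ico_eq_sum_range]
    have hqq : 2 * q - 1 - q = q - 1 := by omega
    rw [hqq]
    refine Finset.sum_congr rfl fun i hi => ?_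
    rw [bLo, if_neg (by omega)]
    push_cast
    ring
  rw [h1, h2]
  simp only [Finset.sum_sub_distrib, Finset.sum_const, ← Finset.sum_mul,
    Finset.card_range, nsmul_eq_mul]
  have g1 := sum_range_cast_id q
  have g2 := sum_range_cast_id (q - 1)
  have hc : ((q - 1 : ℕ) : ℝ) = (q : ℝ) - 1 := by
    push_cast [Nat.cast_sub hq]; ring
  rw [hc]
  have hs1 : (∑ i ∈ Finset.range q, (i : ℝ)) = (q : ℝ) * ((q : ℝ) - 1) / 2 := by linarith
  have hs2 : (∑ i ∈ Finset.range (q - 1), (i : ℝ))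
      = ((q : ℝ) - 1) * ((q : ℝ) - 2) / 2 := by rw [hc] at g2; linarith
  rw [hs1, hs2]
  field_simp
  ring

lemma box_facts (q : ℕ) (hq : 1 ≤ q) {t : ℝ} (ht : 0 < t)
    (ht1 : t ≤ 1 / (8 * ((q : ℝ) + 3)))
    {y : Fin (2 * q - 1) → ℝ} (hy : y ∈ bBox q t)
    (x : Fin (2 * q) → ℝ)
    (hx : ∀ i : Fin (2 * q), x i =
      if h : (i : ℕ) < 2 * q - 1 then y ⟨i, h⟩ else (q : ℝ) - ∑ j, y j) :
    (∀ i : Fin (2 * q), (i : ℕ) < q → 1 - ((q : ℝ) + 3) * t ≤ x i ∧ x i ≤ 1 - 2 * t)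
    ∧ (∀ i : Fin (2 * q), q ≤ (i : ℕ) → t ≤ x i ∧ x i ≤ ((q : ℝ) + 3) * t)
    ∧ (∀ i j : Fin (2 * q), (i : ℕ) < (j : ℕ) → x j + t / 2 ≤ x i) := by
  have hq1 : (1 : ℝ) ≤ (q : ℝ) := by exact_mod_cast hq
  have hq0 : (0 : ℝ) < (q : ℝ) := by linarith
  have hiq0 : (0 : ℝ) < (q : ℝ)⁻¹ := by positivity
  have hiq1 : (q : ℝ)⁻¹ ≤ 1 := by
    rw [inv_le_one_iff₀]; right; exact hq1
  have hw0 : 0 < t / (4 * q) := by positivity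
  have hw4 : t / (4 * q) ≤ t / 4 := by
    apply div_le_div_of_nonneg_left ht.le (by norm_num)
    nlinarith
  have h8 : ((q : ℝ) + 3) * t ≤ 1 / 8 := by
    rw [le_div_iff₀ (by positivity)] at ht1
    nlinarith [ht1]
  have ht1' : t ≤ 1 := by nlinarith [h8, hq1, ht]
  have hyi : ∀ i : Fin (2 * q - 1), bLo q t i.val ≤ y i ∧ y i ≤ bLo q t i.val + t / (4 * q) := by
    intro i
    exact (Set.mem_univ_pi.mp hy) i
  -- the three basic coordinate descriptions
  have hone : ∀ i : Fin (2 * q), (i : ℕ) < q →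
      1 - (((i : ℕ) : ℝ) + 3 - (q : ℝ)⁻¹) * t - t / (4 * q) ≤ x i ∧
        x i ≤ 1 - (((i : ℕ) : ℝ) + 3 - (q : ℝ)⁻¹) * t := by
    intro i hi
    have hlt : (i : ℕ) < 2 * q - 1 := by omega
    rw [hx i, dif_pos hlt]
    have hvi := hyi ⟨(i : ℕ), hlt⟩
    simp only [Fin.val_mk] at hvi
    rw [bLo, if_pos hi] at hvi
    exact ⟨hvi.1, by linarith [hvi.2]⟩
  have hfree : ∀ i : Fin (2 * q), q ≤ (i : ℕ) → (i : ℕ) < 2 * q - 1 →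
      (2 * (q : ℝ) + 2 - ((i : ℕ) : ℝ)) * t ≤ x i ∧
        x i ≤ (2 * (q : ℝ) + 2 - ((i : ℕ) : ℝ)) * t + t / (4 * q) := by
    intro i hi hlt
    rw [hx i, dif_pos hlt]
    have hvi := hyi ⟨(i : ℕ), hlt⟩
    simp only [Fin.val_mk] at hvi
    rw [bLo, if_neg (by omega)] at hvi
    exact hvi
  have hlast : ∀ i : Fin (2 * q), ¬((i : ℕ) < 2 * q - 1) →
      7 * t / 4 ≤ x i ∧ x i ≤ 9 * t / 4 := by
    intro i hi
    rw [hx i, dif_neg hi]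
    have hsl : ∑ j : Fin (2 * q - 1), bLo q t (j : ℕ) ≤ ∑ j, y j :=
      Finset.sum_le_sum fun j _ => (hyi j).1
    have hsu : ∑ j, y j ≤
        ∑ j : Fin (2 * q - 1), (bLo q t (j : ℕ) + t / (4 * q)) :=
      Finset.sum_le_sum fun j _ => (hyi j).2
    rw [Finset.sum_add_distrib, Finset.sum_const, Finset.card_univ,
      Fintype.card_fin, nsmul_eq_mul] at hsu
    rw [sum_bLo q hq t] at hsl hsu
    have hcard : ((2 * q - 1 : ℕ) : ℝ) ≤ 2 * (q : ℝ) := by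
      push_cast [Nat.cast_sub (by omega : 1 ≤ 2 * q)]
      linarith
    have h2q : (2 * (q : ℝ)) * (t / (4 * q)) = t / 2 := by
      field_simp
      ring
    have : ((2 * q - 1 : ℕ) : ℝ) * (t / (4 * q)) ≤ t / 2 := by
      rw [← h2q]
      exact mul_le_mul_of_nonneg_right hcard hw0.le
    constructor <;> linarith
  -- part a
  have ha : ∀ i : Fin (2 * q), (i : ℕ) < q →
      1 - ((q : ℝ) + 3) * t ≤ x i ∧ x i ≤ 1 - 2 * t := by
    intro i hi
    obtain ⟨l, u⟩ := hone i hi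
    have hile : ((i : ℕ) : ℝ) + 1 ≤ (q : ℝ) := by exact_mod_cast hi
    have hi0 : (0 : ℝ) ≤ ((i : ℕ) : ℝ) := by positivity
    have k1 : (((i : ℕ) : ℝ) + 3 - (q : ℝ)⁻¹) * t ≤ ((q : ℝ) + 2) * t := by
      apply mul_le_mul_of_nonneg_right _ ht.le
      linarith
    have k2 : 2 * t ≤ (((i : ℕ) : ℝ) + 3 - (q : ℝ)⁻¹) * t := by
      apply mul_le_mul_of_nonneg_right _ ht.le
      linarith
    constructor <;> linarith
  -- part b
  have hb : ∀ i : Fin (2 * q), q ≤ (i : ℕ) →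
      t ≤ x i ∧ x i ≤ ((q : ℝ) + 3) * t := by
    intro i hi
    by_cases hlt : (i : ℕ) < 2 * q - 1
    · obtain ⟨l, u⟩ := hfree i hi hlt
      have hile : ((i : ℕ) : ℝ) ≤ 2 * (q : ℝ) - 2 := by
        have : (i : ℕ) ≤ 2 * q - 2 := by omega
        have h2 : ((i : ℕ) : ℝ) ≤ ((2 * q - 2 : ℕ) : ℝ) := by exact_mod_cast this
        have h3 : ((2 * q - 2 : ℕ) : ℝ) = 2 * (q : ℝ) - 2 := by
          push_cast [Nat.cast_sub (by omega : 2 ≤ 2 * q)]; ring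
        linarith
      have hige : (q : ℝ) ≤ ((i : ℕ) : ℝ) := by exact_mod_cast hi
      have k1 : 4 * t ≤ (2 * (q : ℝ) + 2 - ((i : ℕ) : ℝ)) * t := by
        apply mul_le_mul_of_nonneg_right _ ht.le
        linarith
      have k2 : (2 * (q : ℝ) + 2 - ((i : ℕ) : ℝ)) * t ≤ ((q : ℝ) + 2) * t := by
        apply mul_le_mul_of_nonneg_right _ ht.le
        linarith
      constructor <;> linarith
    · obtain ⟨l, u⟩ := hlast i hlt
      have kq : 1 * t ≤ (q : ℝ) * t := mul_le_mul_of_nonneg_right hq1 ht.le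
      constructor <;> linarith [kq, l, u]
  refine ⟨ha, hb, ?_⟩
  intro i j hij
  by_cases hj : (j : ℕ) < q
  · have hi : (i : ℕ) < q := by omega
    obtain ⟨li, _⟩ := hone i hi
    obtain ⟨_, uj⟩ := hone j hj
    have hcast : ((i : ℕ) : ℝ) + 1 ≤ ((j : ℕ) : ℝ) := by exact_mod_cast hij
    have key : 1 * t ≤ (((j : ℕ) : ℝ) - ((i : ℕ) : ℝ)) * t :=
      mul_le_mul_of_nonneg_right (by linarith) ht.le
    linarith [key, li, uj, hw4]
  · by_cases hi : (i : ℕ) < q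
    · obtain ⟨li, _⟩ := ha i hi
      obtain ⟨_, uj⟩ := hb j (by omega)
      linarith
    · -- q ≤ i < j
      by_cases hjl : (j : ℕ) < 2 * q - 1
      · obtain ⟨li, _⟩ := hfree i (by omega) (by omega)
        obtain ⟨_, uj⟩ := hfree j (by omega) hjl
        have hcast : ((i : ℕ) : ℝ) + 1 ≤ ((j : ℕ) : ℝ) := by exact_mod_cast hij
        have key : 1 * t ≤ (((j : ℕ) : ℝ) - ((i : ℕ) : ℝ)) * t :=
          mul_le_mul_of_nonneg_right (by linarith) ht.le
        linarith [key, li, uj, hw4]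
      · obtain ⟨li, _⟩ := hfree i (by omega) (by omega)
        obtain ⟨_, uj⟩ := hlast j hjl
        have hige : (q : ℝ) ≤ ((i : ℕ) : ℝ) := by
          have : q ≤ (i : ℕ) := by omega
          exact_mod_cast this
        have hile : ((i : ℕ) : ℝ) ≤ 2 * (q : ℝ) - 2 := by
          have h0 : (i : ℕ) ≤ 2 * q - 2 := by omega
          have h2 : ((i : ℕ) : ℝ) ≤ ((2 * q - 2 : ℕ) : ℝ) := by exact_mod_cast h0
          have h3 : ((2 * q - 2 : ℕ) : ℝ) = 2 * (q : ℝ) - 2 := by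
            push_cast [Nat.cast_sub (by omega : 2 ≤ 2 * q)]; ring
          linarith
        have k1 : 4 * t ≤ (2 * (q : ℝ) + 2 - ((i : ℕ) : ℝ)) * t := by
          apply mul_le_mul_of_nonneg_right _ ht.le
          linarith
        linarith

lemma count_within (q : ℕ) (hq : 1 ≤ q) :
    ∑ i : Fin (2 * q), ((Finset.Ioi i).filter
      (fun j : Fin (2 * q) => (j : ℕ) < q ∨ q ≤ (i : ℕ))).card = q * (q - 1) := by
  have hcard : ∀ i : Fin (2 * q), ((Finset.Ioi i).filter
      (fun j : Fin (2 * q) => (j : ℕ) < q ∨ q ≤ (i : ℕ))).card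
      = if (i : ℕ) < q then q - 1 - (i : ℕ) else 2 * q - 1 - (i : ℕ) := by
    intro i
    by_cases hi : (i : ℕ) < q
    · rw [if_pos hi]
      have he : (Finset.Ioi i).filter
          (fun j : Fin (2 * q) => (j : ℕ) < q ∨ q ≤ (i : ℕ))
          = Finset.Ioo i ⟨q, by omega⟩ := by
        ext j
        simp only [Finset.mem_filter, Finset.mem_Ioi, Finset.mem_Ioo, Fin.lt_def,
          Fin.val_mk]
        omega
      rw [he, Fin.card_Ioo]
      simp only [Fin.val_mk]
      omega
    · rw [if_neg hi]
      rw [Finset.filter_true_of_mem (fun j _ => Or.inr (by omega)), Fin.card_Ioi]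
  rw [Finset.sum_congr rfl (fun i _ => hcard i)]
  rw [Fin.sum_univ_eq_sum_range (fun k => if k < q then q - 1 - k else 2 * q - 1 - k) (2 * q)]
  rw [Finset.range_eq_Ico, ← Finset.sum_Ico_consecutive _ (Nat.zero_le q) (by omega : q ≤ 2 * q)]
  have h1 : ∑ i ∈ Finset.Ico 0 q, (if i < q then q - 1 - i else 2 * q - 1 - i)
      = ∑ i ∈ Finset.range q, i := by
    rw [← Finset.range_eq_Ico]
    rw [Finset.sum_congr rfl (fun i hi => if_pos (Finset.mem_range.mp hi))]
    exact Finset.sum_range_reflect (fun j => j) q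
  have h2 : ∑ i ∈ Finset.Ico q (2 * q), (if i < q then q - 1 - i else 2 * q - 1 - i)
      = ∑ i ∈ Finset.range q, i := by
    rw [Finset.sum_Ico_eq_sum_range]
    have hqq : 2 * q - q = q := by omega
    rw [hqq]
    have hcon : ∀ i ∈ Finset.range q,
        (if q + i < q then q - 1 - (q + i) else 2 * q - 1 - (q + i)) = q - 1 - i := by
      intro i hi
      rw [if_neg (by omega)]
      have := Finset.mem_range.mp hi
      omega
    rw [Finset.sum_congr rfl hcon]
    exact Finset.sum_range_reflect (fun j => j) q
  rw [h1, h2]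
  have := Finset.sum_range_id_mul_two q
  omega

set_option maxHeartbeats 1000000 in
lemma integrand_lb (q : ℕ) (hq : 1 ≤ q) (β : ℝ) (hβ : 4 * (q : ℝ) ^ 2 ≤ β)
    {t : ℝ} (ht : 0 < t) (ht1 : t ≤ 1 / (8 * ((q : ℝ) + 3)))
    (x : Fin (2 * q) → ℝ)
    (ha : ∀ i : Fin (2 * q), (i : ℕ) < q → 1 - ((q : ℝ) + 3) * t ≤ x i ∧ x i ≤ 1 - 2 * t)
    (hb : ∀ i : Fin (2 * q), q ≤ (i : ℕ) → t ≤ x i ∧ x i ≤ ((q : ℝ) + 3) * t)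
    (h3 : ∀ i j : Fin (2 * q), (i : ℕ) < (j : ℕ) → x j + t / 2 ≤ x i) :
    (1 / 2 : ℝ) ^ (4 * q ^ 2 + 1) * ((q : ℝ) + 3) ^ (-(2 * (q : ℝ))) * t ^ ((1 : ℝ) - 2 * q)
      ≤ (∏ i : Fin (2 * q), ∏ j ∈ Finset.Ioi i, (x i - x j) ^ (4 / β)) *
        ∏ i : Fin (2 * q), (x i * (1 - x i)) ^ (2 / β - 1) := by
  have hq1 : (1 : ℝ) ≤ (q : ℝ) := by exact_mod_cast hq
  have hβ0 : (0 : ℝ) < β := by nlinarith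
  have h4β : (0 : ℝ) ≤ 4 / β := by positivity
  have h4β1 : 4 / β ≤ 1 := by rw [div_le_one hβ0]; nlinarith
  have hzβ : 2 / β - 1 ≤ 0 := by
    have : 2 / β ≤ 1 := by rw [div_le_one hβ0]; nlinarith
    linarith
  have h8 : ((q : ℝ) + 3) * t ≤ 1 / 8 := by
    rw [le_div_iff₀ (by positivity)] at ht1
    nlinarith [ht1]
  have ht1' : t ≤ 1 := by nlinarith [h8, hq1, ht]
  set A := (t / 2) ^ (4 / β) with hA
  set aR := 4 / β * ((q : ℝ) * ((q : ℝ) - 1)) with haR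
  set bR := (2 / β - 1) * (2 * (q : ℝ)) with hbR
  -- V lower bound
  have hVstep : ∏ i : Fin (2 * q), ∏ j ∈ Finset.Ioi i,
      (if ((j : ℕ) < q ∨ q ≤ (i : ℕ)) then A else (1 / 2 : ℝ))
      ≤ ∏ i : Fin (2 * q), ∏ j ∈ Finset.Ioi i, (x i - x j) ^ (4 / β) := by
    refine Finset.prod_le_prod (fun i _ => Finset.prod_nonneg fun j _ => ?_)
      (fun i _ => Finset.prod_le_prod (fun j _ => ?_) (fun j hj => ?_))
    · split_ifs
      · exact Real.rpow_nonneg (by positivity) _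
      · norm_num
    · split_ifs
      · exact Real.rpow_nonneg (by positivity) _
      · norm_num
    · have hij : (i : ℕ) < (j : ℕ) := Fin.lt_def.mp (Finset.mem_Ioi.mp hj)
      have hd : t / 2 ≤ x i - x j := by linarith [h3 i j hij]
      split_ifs with hc
      · exact Real.rpow_le_rpow (by positivity) hd h4β
      · push_neg at hc
        have hxi := (ha i (by omega)).1
        have hxj := (hb j (by omega)).2
        have hxd : 1 / 2 ≤ x i - x j := by linarith
        calc (1 / 2 : ℝ) = (1 / 2 : ℝ) ^ (1 : ℝ) := (Real.rpow_one _).symm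
          _ ≤ (1 / 2 : ℝ) ^ (4 / β) :=
            Real.rpow_le_rpow_of_exponent_ge (by norm_num) (by norm_num) h4β1
          _ ≤ (x i - x j) ^ (4 / β) := Real.rpow_le_rpow (by norm_num) hxd h4β
  have hVeval : ∏ i : Fin (2 * q), ∏ j ∈ Finset.Ioi i,
      (if ((j : ℕ) < q ∨ q ≤ (i : ℕ)) then A else (1 / 2 : ℝ))
      = A ^ (∑ i : Fin (2 * q), ((Finset.Ioi i).filter
            (fun j : Fin (2 * q) => (j : ℕ) < q ∨ q ≤ (i : ℕ))).card)
        * (1 / 2 : ℝ) ^ (∑ i : Fin (2 * q), ((Finset.Ioi i).filter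
            (fun j : Fin (2 * q) => ¬((j : ℕ) < q ∨ q ≤ (i : ℕ)))).card) := by
    rw [← Finset.prod_pow_eq_pow_sum, ← Finset.prod_pow_eq_pow_sum,
      ← Finset.prod_mul_distrib]
    refine Finset.prod_congr rfl fun i _ => ?_
    rw [Finset.prod_ite, Finset.prod_const, Finset.prod_const]
  have hF : (∑ i : Fin (2 * q), ((Finset.Ioi i).filter
      (fun j : Fin (2 * q) => ¬((j : ℕ) < q ∨ q ≤ (i : ℕ)))).card) ≤ 4 * q ^ 2 := by
    calc (∑ i : Fin (2 * q), ((Finset.Ioi i).filter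
        (fun j : Fin (2 * q) => ¬((j : ℕ) < q ∨ q ≤ (i : ℕ)))).card)
        ≤ ∑ _i : Fin (2 * q), 2 * q := by
          refine Finset.sum_le_sum fun i _ => ?_
          calc ((Finset.Ioi i).filter _).card ≤ (Finset.Ioi i).card :=
              Finset.card_filter_le _ _
            _ ≤ (Finset.univ : Finset (Fin (2 * q))).card := Finset.card_le_univ _
            _ = 2 * q := by simp
      _ = 4 * q ^ 2 := by
          rw [Finset.sum_const, Finset.card_univ, Fintype.card_fin, smul_eq_mul]
          ring
  have hA0 : (0 : ℝ) ≤ A := Real.rpow_nonneg (by positivity) _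
  have hA1 : A ≤ 1 := Real.rpow_le_one (by positivity) (by linarith) h4β
  have hcastq : ((q * (q - 1) : ℕ) : ℝ) = (q : ℝ) * ((q : ℝ) - 1) := by
    push_cast [Nat.cast_sub hq]
    ring
  have hAeq : A ^ (q * (q - 1)) = t ^ aR * (1 / 2 : ℝ) ^ aR := by
    rw [hA, ← Real.rpow_natCast ((t / 2) ^ (4 / β)) (q * (q - 1)),
      ← Real.rpow_mul (by positivity), hcastq, ← haR]
    rw [show t / 2 = t * (1 / 2) by ring, Real.mul_rpow ht.le (by norm_num)]
  have haR1 : aR ≤ 1 := by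
    rw [haR]
    rw [div_mul_eq_mul_div, div_le_one hβ0]
    nlinarith
  have haR0 : 0 ≤ aR := by
    rw [haR]
    have : (0:ℝ) ≤ (q : ℝ) - 1 := by linarith
    positivity
  have hhalf : (1 / 2 : ℝ) ≤ (1 / 2 : ℝ) ^ aR := by
    calc (1 / 2 : ℝ) = (1 / 2 : ℝ) ^ (1 : ℝ) := (Real.rpow_one _).symm
      _ ≤ (1 / 2 : ℝ) ^ aR :=
        Real.rpow_le_rpow_of_exponent_ge (by norm_num) (by norm_num) haR1
  have hV : (t ^ aR * (1 / 2 : ℝ)) * (1 / 2 : ℝ) ^ (4 * q ^ 2)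
      ≤ ∏ i : Fin (2 * q), ∏ j ∈ Finset.Ioi i, (x i - x j) ^ (4 / β) := by
    refine le_trans ?_ hVstep
    rw [hVeval, count_within q hq]
    have step1 : t ^ aR * (1 / 2 : ℝ) ≤ A ^ (q * (q - 1)) := by
      rw [hAeq]
      exact mul_le_mul_of_nonneg_left hhalf (Real.rpow_nonneg ht.le _)
    have step2 : (1 / 2 : ℝ) ^ (4 * q ^ 2) ≤ (1 / 2 : ℝ) ^ (∑ i : Fin (2 * q),
        ((Finset.Ioi i).filter
          (fun j : Fin (2 * q) => ¬((j : ℕ) < q ∨ q ≤ (i : ℕ)))).card) :=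
      pow_le_pow_of_le_one (by norm_num) (by norm_num) hF
    exact mul_le_mul step1 step2 (by positivity) (pow_nonneg hA0 _)
  -- P lower bound
  have hPstep : ∏ _i : Fin (2 * q), (((q : ℝ) + 3) * t) ^ (2 / β - 1)
      ≤ ∏ i : Fin (2 * q), (x i * (1 - x i)) ^ (2 / β - 1) := by
    refine Finset.prod_le_prod (fun i _ => Real.rpow_nonneg (by positivity) _)
      (fun i _ => ?_)
    have hkey : 0 < x i * (1 - x i) ∧ x i * (1 - x i) ≤ ((q : ℝ) + 3) * t := by
      by_cases hi : (i : ℕ) < q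
      · obtain ⟨l, u⟩ := ha i hi
        have h1x : 1 - x i ≤ ((q : ℝ) + 3) * t := by linarith
        have h1x0 : (0 : ℝ) ≤ 1 - x i := by linarith
        have hx1 : x i ≤ 1 := by linarith
        constructor
        · apply mul_pos (by linarith) (by linarith)
        · nlinarith [mul_le_mul_of_nonneg_right hx1 h1x0]
      · obtain ⟨l, u⟩ := hb i (by omega)
        have hx0 : 0 ≤ x i := by linarith
        have h1x : 1 - x i ≤ 1 := by linarith
        constructor
        · apply mul_pos (by linarith) (by nlinarith)
        · nlinarith [mul_le_mul_of_nonneg_left h1x hx0]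
    exact Real.rpow_le_rpow_of_nonpos hkey.1 hkey.2 hzβ
  have hPeval : ∏ _i : Fin (2 * q), (((q : ℝ) + 3) * t) ^ (2 / β - 1)
      = ((q : ℝ) + 3) ^ bR * t ^ bR := by
    rw [Finset.prod_const, Finset.card_univ, Fintype.card_fin,
      ← Real.rpow_natCast ((((q : ℝ) + 3) * t) ^ (2 / β - 1)) (2 * q),
      ← Real.rpow_mul (by positivity)]
    have : (2 / β - 1) * ((2 * q : ℕ) : ℝ) = bR := by
      rw [hbR]; push_cast; ring
    rw [this, Real.mul_rpow (by positivity) ht.le]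
  have hq3bR : ((q : ℝ) + 3) ^ (-(2 * (q : ℝ))) ≤ ((q : ℝ) + 3) ^ bR := by
    apply Real.rpow_le_rpow_of_exponent_le (by linarith)
    rw [hbR]
    have h2β : (0 : ℝ) ≤ 2 / β := by positivity
    nlinarith
  have hP : ((q : ℝ) + 3) ^ (-(2 * (q : ℝ))) * t ^ bR
      ≤ ∏ i : Fin (2 * q), (x i * (1 - x i)) ^ (2 / β - 1) := by
    refine le_trans ?_ hPstep
    rw [hPeval]
    exact mul_le_mul_of_nonneg_right hq3bR (Real.rpow_nonneg ht.le _)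
  -- combine
  have hexp : aR + bR ≤ 1 - 2 * (q : ℝ) := by
    have h41 : 4 * (q : ℝ) ^ 2 / β ≤ 1 := (div_le_one hβ0).mpr hβ
    have heq : aR + bR = 4 * (q : ℝ) ^ 2 / β - 2 * (q : ℝ) := by
      rw [haR, hbR]
      field_simp
      ring
    linarith
  have ht_exp : t ^ ((1 : ℝ) - 2 * q) ≤ t ^ aR * t ^ bR := by
    rw [← Real.rpow_add ht]
    exact Real.rpow_le_rpow_of_exponent_ge ht ht1' hexp
  have hVnn : (0 : ℝ) ≤ ∏ i : Fin (2 * q), ∏ j ∈ Finset.Ioi i, (x i - x j) ^ (4 / β) :=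
    Finset.prod_nonneg fun i _ => Finset.prod_nonneg fun j hj =>
      Real.rpow_nonneg (by
        have hij : (i : ℕ) < (j : ℕ) := Fin.lt_def.mp (Finset.mem_Ioi.mp hj)
        linarith [h3 i j hij, ht]) _
  calc (1 / 2 : ℝ) ^ (4 * q ^ 2 + 1) * ((q : ℝ) + 3) ^ (-(2 * (q : ℝ))) * t ^ ((1 : ℝ) - 2 * q)
      ≤ (1 / 2 : ℝ) ^ (4 * q ^ 2 + 1) * ((q : ℝ) + 3) ^ (-(2 * (q : ℝ))) * (t ^ aR * t ^ bR) := by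
        apply mul_le_mul_of_nonneg_left ht_exp (by positivity)
    _ = ((t ^ aR * (1 / 2 : ℝ)) * (1 / 2 : ℝ) ^ (4 * q ^ 2)) *
        (((q : ℝ) + 3) ^ (-(2 * (q : ℝ))) * t ^ bR) := by
        rw [pow_succ]; ring
    _ ≤ (∏ i : Fin (2 * q), ∏ j ∈ Finset.Ioi i, (x i - x j) ^ (4 / β)) *
        ∏ i : Fin (2 * q), (x i * (1 - x i)) ^ (2 / β - 1) :=
      mul_le_mul hV hP (by positivity) hVnn

set_option maxHeartbeats 1000000 in
/-- For `q ≥ 1` and `β ≥ 4q²`, the integral over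
`{x ∈ [0,1]^{2q} : x₁ ≥ ⋯ ≥ x_{2q}, ∑ xᵢ = q}` of
`∏_{i<j}(xᵢ−x_j)^{4/β} ∏_i [xᵢ(1−xᵢ)]^{2/β−1}`, with respect to the
`(2q−1)`-dimensional Lebesgue measure on the hyperplane (parametrized by the
first `2q−1` coordinates, the last being determined by the sum constraint),
is infinite. -/
theorem constrained_integral_eq_top (q : ℕ) (hq : 1 ≤ q) (β : ℝ)
    (hβ : 4 * (q : ℝ) ^ 2 ≤ β)
    (X : (Fin (2 * q - 1) → ℝ) → Fin (2 * q) → ℝ)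
    (hX : ∀ y i, X y i =
      if h : (i : ℕ) < 2 * q - 1 then y ⟨i, h⟩ else (q : ℝ) - ∑ j, y j) :
    ∫⁻ y in {y : Fin (2 * q - 1) → ℝ |
        (∀ i, X y i ∈ Set.Icc (0 : ℝ) 1) ∧
          ∀ i j : Fin (2 * q), i ≤ j → X y j ≤ X y i},
      ENNReal.ofReal
        ((∏ i : Fin (2 * q), ∏ j ∈ Finset.Ioi i, (X y i - X y j) ^ (4 / β)) *
          ∏ i : Fin (2 * q), (X y i * (1 - X y i)) ^ (2 / β - 1)) = ⊤ := by
  classical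
  have hq1 : (1 : ℝ) ≤ (q : ℝ) := by exact_mod_cast hq
  have hq0 : (0 : ℝ) < (q : ℝ) := by linarith
  set S : Set (Fin (2 * q - 1) → ℝ) := {y : Fin (2 * q - 1) → ℝ |
      (∀ i, X y i ∈ Set.Icc (0 : ℝ) 1) ∧
        ∀ i j : Fin (2 * q), i ≤ j → X y j ≤ X y i} with hS
  set F : (Fin (2 * q - 1) → ℝ) → ℝ≥0∞ := fun y => ENNReal.ofReal
      ((∏ i : Fin (2 * q), ∏ j ∈ Finset.Ioi i, (X y i - X y j) ^ (4 / β)) *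
        ∏ i : Fin (2 * q), (X y i * (1 - X y i)) ^ (2 / β - 1)) with hF
  set t0 : ℝ := 1 / (8 * ((q : ℝ) + 3)) with ht0def
  have ht0 : 0 < t0 := by rw [ht0def]; positivity
  set tn : ℕ → ℝ := fun n => t0 * (1 / 2) ^ n with htndef
  have htnpos : ∀ n, 0 < tn n := fun n => by rw [htndef]; positivity
  have htnle : ∀ n, tn n ≤ t0 := by
    intro n
    rw [htndef]
    have h1 : ((1:ℝ)/2) ^ n ≤ 1 := pow_le_one₀ (by norm_num) (by norm_num)
    nlinarith
  have htnle' : ∀ n, tn n ≤ 1 / (8 * ((q : ℝ) + 3)) := fun n => htnle n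
  set B : ℕ → Set (Fin (2 * q - 1) → ℝ) := fun n => bBox q (tn n) with hBdef
  have hmeas : ∀ n, MeasurableSet (B n) := fun n =>
    MeasurableSet.univ_pi fun i => measurableSet_Icc
  -- key coordinate for disjointness
  have hi0 : 0 < 2 * q - 1 := by omega
  have hkey : ∀ n (y : Fin (2 * q - 1) → ℝ), y ∈ B n →
      2 * tn n ≤ 1 - y ⟨0, hi0⟩ ∧ 1 - y ⟨0, hi0⟩ ≤ 7 / 2 * tn n := by
    intro n y hy
    have h := (Set.mem_univ_pi.mp hy) ⟨0, hi0⟩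
    rw [bLo] at h
    simp only [Fin.val_mk, Nat.cast_zero] at h
    rw [if_pos (by omega : 0 < q)] at h
    obtain ⟨l, u⟩ := h
    have hinv1 : (q : ℝ)⁻¹ ≤ 1 := by
      rw [inv_le_one_iff₀]; right; exact hq1
    have hinv0 : (0 : ℝ) < (q : ℝ)⁻¹ := by positivity
    have ht := htnpos n
    have hw4 : tn n / (4 * q) ≤ tn n / 4 := by
      apply div_le_div_of_nonneg_left ht.le (by norm_num)
      nlinarith
    have k1 : 2 * tn n ≤ ((0 : ℝ) + 3 - (q : ℝ)⁻¹) * tn n := by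
      apply mul_le_mul_of_nonneg_right _ ht.le
      linarith
    have k2 : ((0 : ℝ) + 3 - (q : ℝ)⁻¹) * tn n ≤ 3 * tn n := by
      apply mul_le_mul_of_nonneg_right _ ht.le
      linarith
    constructor <;> [linarith; nlinarith [hw4]]
  have hdisj : Pairwise (Function.onFun Disjoint B) := by
    have aux : ∀ n m, n < m → Disjoint (B n) (B m) := by
      intro n m hnm
      rw [Set.disjoint_left]
      intro y hyn hym
      obtain ⟨l1, u1⟩ := hkey n y hyn
      obtain ⟨l2, u2⟩ := hkey m y hym
      have hm : tn m ≤ tn n * (1 / 2) := by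
        rw [htndef]
        have : ((1:ℝ)/2) ^ m ≤ (1/2) ^ (n + 1) :=
          pow_le_pow_of_le_one (by norm_num) (by norm_num) (by omega)
        calc t0 * (1/2) ^ m ≤ t0 * (1/2)^(n+1) := by nlinarith
          _ = t0 * (1/2)^n * (1/2) := by ring
      have := htnpos n
      linarith
    intro n m hnm
    rcases hnm.lt_or_gt with h | h
    · exact aux n m h
    · exact (aux m n h).symm
  have hsub : ∀ n, B n ⊆ S := by
    intro n y hy
    obtain ⟨ha, hb, h3⟩ := box_facts q hq (htnpos n) (htnle' n) hy (X y) (hX y)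
    have ht := htnpos n
    have h8 : ((q : ℝ) + 3) * tn n ≤ 1 / 8 := by
      have := htnle' n
      rw [le_div_iff₀ (by positivity)] at this
      nlinarith [this]
    constructor
    · intro i
      by_cases hi : (i : ℕ) < q
      · obtain ⟨l, u⟩ := ha i hi
        exact ⟨by linarith, by linarith⟩
      · obtain ⟨l, u⟩ := hb i (by omega)
        exact ⟨by linarith, by linarith⟩
    · intro i j hij
      rcases eq_or_lt_of_le hij with rfl | hlt
      · exact le_refl _
      · have := h3 i j (Fin.lt_def.mp hlt)
        linarith
  -- constants
  set Kc : ℝ := (1 / 2 : ℝ) ^ (4 * q ^ 2 + 1) * ((q : ℝ) + 3) ^ (-(2 * (q : ℝ))) with hKc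
  have hKcpos : 0 < Kc := by
    rw [hKc]
    have : (0:ℝ) < ((q : ℝ) + 3) ^ (-(2 * (q : ℝ))) := Real.rpow_pos_of_pos (by linarith) _
    positivity
  set C : ℝ≥0∞ := ENNReal.ofReal (Kc * (1 / (4 * (q : ℝ))) ^ (2 * q - 1)) with hC
  have hCne : C ≠ 0 := by
    rw [hC]
    have h1 : (0:ℝ) < (1 / (4 * (q : ℝ))) ^ (2 * q - 1) := by positivity
    exact (ENNReal.ofReal_pos.mpr (by positivity)).ne'
  -- volume of boxes
  have hvol : ∀ n, volume (B n) = ENNReal.ofReal ((tn n / (4 * q)) ^ (2 * q - 1)) := by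
    intro n
    rw [hBdef]
    show (volume : Measure (Fin (2*q-1) → ℝ)) (Set.univ.pi fun i => Set.Icc _ _) = _
    rw [volume_pi_pi]
    simp only [Real.volume_Icc, add_sub_cancel_left]
    rw [Finset.prod_const, Finset.card_univ, Fintype.card_fin,
      ← ENNReal.ofReal_pow (by positivity)]
  -- per box integral lower bound
  have hboxint : ∀ n, C ≤ ∫⁻ y in B n, F y := by
    intro n
    have ht := htnpos n
    have step : ∫⁻ _y in B n, ENNReal.ofReal (Kc * tn n ^ ((1 : ℝ) - 2 * q))
        ≤ ∫⁻ y in B n, F y := by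
      apply setLIntegral_mono' (hmeas n)
      intro y hy
      obtain ⟨ha, hb, h3⟩ := box_facts q hq (htnpos n) (htnle' n) hy (X y) (hX y)
      apply ENNReal.ofReal_le_ofReal
      exact integrand_lb q hq β hβ (htnpos n) (htnle' n) (X y) ha hb h3
    rw [setLIntegral_const, hvol n] at step
    refine le_trans (le_of_eq ?_) step
    rw [← ENNReal.ofReal_mul (by positivity), hC]
    congr 1
    have hcast : ((2 * q - 1 : ℕ) : ℝ) = 2 * (q : ℝ) - 1 := by
      push_cast [Nat.cast_sub (by omega : 1 ≤ 2 * q)]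
      ring
    have hsplit : (tn n / (4 * q)) ^ (2 * q - 1)
        = tn n ^ (2 * q - 1 : ℕ) * (1 / (4 * (q : ℝ))) ^ (2 * q - 1) := by
      rw [div_eq_mul_one_div, mul_pow]
    have htpow : tn n ^ ((1 : ℝ) - 2 * q) * tn n ^ (2 * q - 1 : ℕ) = 1 := by
      rw [← Real.rpow_natCast (tn n) (2 * q - 1), hcast, ← Real.rpow_add ht]
      norm_num
    rw [hsplit,
      show Kc * tn n ^ ((1 : ℝ) - 2 * q) * (tn n ^ (2 * q - 1 : ℕ)
          * (1 / (4 * (q : ℝ))) ^ (2 * q - 1))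
        = Kc * (tn n ^ ((1 : ℝ) - 2 * q) * tn n ^ (2 * q - 1 : ℕ))
          * (1 / (4 * (q : ℝ))) ^ (2 * q - 1) from by ring,
      htpow, mul_one]
  -- glue
  have hchain : (⊤ : ℝ≥0∞) ≤ ∫⁻ y in S, F y := by
    calc (⊤ : ℝ≥0∞) = ∑' _n : ℕ, C := (ENNReal.tsum_const_eq_top_of_ne_zero hCne).symm
      _ ≤ ∑' n : ℕ, ∫⁻ y in B n, F y := ENNReal.tsum_le_tsum hboxint
      _ = ∫⁻ y in ⋃ n, B n, F y := (lintegral_iUnion hmeas hdisj F).symm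
      _ ≤ ∫⁻ y in S, F y := lintegral_mono_set (Set.iUnion_subset hsub)
  exact top_le_iff.mp hchain
end
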